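/- Let σ₀ be a permutation of {1,…,N}, s₀ = A∘σ₀ ∈ S, Y* ∈ H, σ* a permutation minimizing σ ↦ ‖Y*∘σ − s₀‖ over σ ∈ S_N, X* = Y*∘σ*, and t* > 0. Define X : [0,t*] → H by X_t = s₀ + (t/t*)·(X* − s₀). Then for every t ∈ (0,t*]: (i) s₀ is a nearest point of X_t in S, i.e. ‖X_t − s₀‖ ≤ ‖X_t − s‖ for all s ∈ S, and (ii) t·(dX_t/dt) = X_t − s₀; that is, the curve satisfies the self-consistent ordinary differential equation t·dX_t/dt = X_t − π(X_t), where π(X_t) denotes a nearest point of X_t in S. -/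

import Mathlib

/-- The phase space `H = (ℝ^d)^N` with norm `‖X‖² = ∑ₐ |X(a)|²`. -/
abbrev Hsp (N d : ℕ) := PiLp 2 (fun _ : Fin N => EuclideanSpace ℝ (Fin d))

/-- The inclusion of plain maps `{1,…,N} → ℝ^d` into `H`. -/
def toH {N d : ℕ} (X : Fin N → EuclideanSpace ℝ (Fin d)) : Hsp N d := WithLp.toLp 2 X

/-- Composition `X ∘ σ` of an element of `H` with a permutation. -/
def permComp {N d : ℕ} (X : Hsp N d) (σ : Equiv.Perm (Fin N)) : Hsp N d :=
  WithLp.toLp 2 (fun a => X (σ a))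

lemma norm_permComp {N d : ℕ} (Z : Hsp N d) (τ : Equiv.Perm (Fin N)) :
    ‖permComp Z τ‖ = ‖Z‖ := by
  have hp : (0:ℝ) < (2 : ENNReal).toReal := by norm_num
  rw [PiLp.norm_eq_sum hp, PiLp.norm_eq_sum hp]
  congr 1
  unfold permComp
  exact Equiv.sum_comp τ (fun a => ‖Z a‖ ^ (2:ENNReal).toReal)

lemma permComp_sub {N d : ℕ} (X Y : Hsp N d) (τ : Equiv.Perm (Fin N)) :
    permComp (X - Y) τ = permComp X τ - permComp Y τ :=
  WithLp.ofLp_injective 2 (by funext a; simp [permComp])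

lemma permComp_permComp {N d : ℕ} (X : Hsp N d) (σ τ : Equiv.Perm (Fin N)) :
    permComp (permComp X σ) τ = permComp X (σ * τ) := rfl

/-- Proposition 2.1: the constant-speed geodesic
`X_t = s₀ + (t/t*)·(X* − s₀)` from `s₀ = A∘σ₀` to the optimally permuted endpoint
`X* = Y*∘σ*` has `s₀` as nearest point in `S = {A∘σ : σ ∈ S_N}` for all
`t ∈ (0,t*]`, and it satisfies the self-consistent ODE `t·dX/dt = X − π(X)`. -/
theorem stmt3 {N d : ℕ} (A : Fin N → EuclideanSpace ℝ (Fin d))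
    (hA : Function.Injective A)
    (σ₀ σstar : Equiv.Perm (Fin N)) (Ystar : Hsp N d)
    (s₀ : Hsp N d) (hs₀ : s₀ = permComp (toH A) σ₀)
    (Xstar : Hsp N d) (hXstar : Xstar = permComp Ystar σstar)
    (hmin : ∀ σ : Equiv.Perm (Fin N), ‖Xstar - s₀‖ ≤ ‖permComp Ystar σ - s₀‖)
    (tstar : ℝ) (htstar : 0 < tstar)
    (X : ℝ → Hsp N d) (hX : ∀ t : ℝ, X t = s₀ + (t / tstar) • (Xstar - s₀)) :
    ∀ t ∈ Set.Ioc (0 : ℝ) tstar,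
      (∀ s ∈ {Z : Hsp N d | ∃ σ : Equiv.Perm (Fin N), Z = permComp (toH A) σ},
        ‖X t - s₀‖ ≤ ‖X t - s‖)
      ∧ t • deriv X t = X t - s₀ := by
  intro t ht
  obtain ⟨ht0, ht1⟩ := ht
  set c : Hsp N d := Xstar - s₀ with hc
  have hfrac0 : 0 ≤ t / tstar := div_nonneg ht0.le htstar.le
  have hfrac1 : t / tstar ≤ 1 := (div_le_one htstar).mpr ht1
  have hXt : X t - s₀ = (t / tstar) • c := by rw [hX t]; abel
  have hXtstar : Xstar - X t = (1 - t / tstar) • c := by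
    rw [hX t]
    rw [sub_smul, one_smul, hc]
    abel
  constructor
  · rintro s ⟨σ, rfl⟩
    -- ‖Xstar - s‖ ≥ ‖Xstar - s₀‖
    have heq : ‖Xstar - permComp (toH A) σ‖
        = ‖permComp Ystar (σstar * (σ⁻¹ * σ₀)) - s₀‖ := by
      conv_lhs => rw [← norm_permComp (Xstar - permComp (toH A) σ) (σ⁻¹ * σ₀)]
      rw [permComp_sub, hXstar, permComp_permComp, permComp_permComp,
        show σ * (σ⁻¹ * σ₀) = σ₀ by group, ← hs₀]
    have key : ‖Xstar - s₀‖ ≤ ‖Xstar - permComp (toH A) σ‖ := by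
      rw [heq]; exact hmin _
    -- triangle inequality
    have htri : ‖Xstar - s₀‖ ≤ ‖X t - permComp (toH A) σ‖ + ‖Xstar - X t‖ := by
      calc ‖Xstar - s₀‖ ≤ ‖Xstar - permComp (toH A) σ‖ := key
        _ = ‖(Xstar - X t) + (X t - permComp (toH A) σ)‖ := by abel_nf
        _ ≤ ‖Xstar - X t‖ + ‖X t - permComp (toH A) σ‖ := norm_add_le _ _
        _ = ‖X t - permComp (toH A) σ‖ + ‖Xstar - X t‖ := by ring
    have hn1 : ‖X t - s₀‖ = (t / tstar) * ‖c‖ := by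
      rw [hXt, norm_smul, Real.norm_eq_abs, abs_of_nonneg hfrac0]
    have hn2 : ‖Xstar - X t‖ = (1 - t / tstar) * ‖c‖ := by
      rw [hXtstar, norm_smul, Real.norm_eq_abs, abs_of_nonneg (by linarith)]
    have hcs : ‖Xstar - s₀‖ = ‖c‖ := by rw [hc]
    rw [hn1]
    rw [hcs, hn2] at htri
    nlinarith [norm_nonneg c]
  · haveI : ContinuousSMul ℝ (Hsp N d) := NormedSpace.toIsBoundedSMul.continuousSMul
    have hderiv : HasDerivAt X (tstar⁻¹ • c) t := by
      have h1 : HasDerivAt (fun u : ℝ => u / tstar) tstar⁻¹ t := by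
        simpa using (hasDerivAt_id t).div_const tstar
      have h2 : HasDerivAt (fun u : ℝ => s₀ + (u / tstar) • c) (tstar⁻¹ • c) t :=
        (h1.smul_const c).const_add s₀
      have : X = fun u : ℝ => s₀ + (u / tstar) • c := funext hX
      rw [this]
      exact h2
    rw [hderiv.deriv, hXt, smul_smul, div_eq_mul_inv]
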